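/- The function (p₁,p₂) ↦ log(1+p₁h₁) + log(1 + p₂h₂/(p₁h₂+1)) on {(p₁,p₂) : p₁ ≥ 0, p₂ ≥ 0} is concave, where h₁ ≥ h₂ > 0. -/

import Mathlib

open Set Real

/-- For `0 < b ≤ a`, the function `x ↦ log (1+x*a) - log (1+x*b)` is concave on `[0, ∞)`. -/
lemma logdiff_concaveOn (a b : ℝ) (hb : 0 < b) (hba : b ≤ a) :
    ConcaveOn ℝ (Set.Ici (0 : ℝ))
      (fun x => Real.log (1 + x * a) - Real.log (1 + x * b)) := by
  have ha : 0 < a := hb.trans_le hba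
  have hpa : ∀ x : ℝ, 0 ≤ x → 0 < 1 + x * a := fun x hx => by positivity
  have hpb : ∀ x : ℝ, 0 ≤ x → 0 < 1 + x * b := fun x hx => by positivity
  refine concaveOn_of_hasDerivWithinAt2_nonpos (convex_Ici 0)
    (f' := fun x => a / (1 + x * a) - b / (1 + x * b))
    (f'' := fun x => a * (-a / (1 + x * a) ^ 2) - b * (-b / (1 + x * b) ^ 2))
    ?_ ?_ ?_ ?_
  · apply ContinuousOn.sub
    · exact (continuousOn_const.add (continuous_id.mul continuous_const).continuousOn).log
        (fun x hx => (hpa x hx).ne')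
    · exact (continuousOn_const.add (continuous_id.mul continuous_const).continuousOn).log
        (fun x hx => (hpb x hx).ne')
  · intro x hx
    rw [interior_Ici] at hx
    have hxa := hpa x (le_of_lt hx)
    have hxb := hpb x (le_of_lt hx)
    have da : HasDerivAt (fun x : ℝ => 1 + x * a) a x := by
      simpa using (hasDerivAt_id x).mul_const a |>.const_add 1
    have db : HasDerivAt (fun x : ℝ => 1 + x * b) b x := by
      simpa using (hasDerivAt_id x).mul_const b |>.const_add 1
    exact ((da.log hxa.ne').sub (db.log hxb.ne')).hasDerivWithinAt
  · intro x hx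
    rw [interior_Ici] at hx
    have hxa := hpa x (le_of_lt hx)
    have hxb := hpb x (le_of_lt hx)
    have da : HasDerivAt (fun x : ℝ => 1 + x * a) a x := by
      simpa using (hasDerivAt_id x).mul_const a |>.const_add 1
    have db : HasDerivAt (fun x : ℝ => 1 + x * b) b x := by
      simpa using (hasDerivAt_id x).mul_const b |>.const_add 1
    have ia : HasDerivAt (fun x : ℝ => (1 + x * a)⁻¹) (-a / (1 + x * a) ^ 2) x :=
      da.inv hxa.ne'
    have ib : HasDerivAt (fun x : ℝ => (1 + x * b)⁻¹) (-b / (1 + x * b) ^ 2) x :=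
      db.inv hxb.ne'
    have h : HasDerivAt (fun x : ℝ => a * (1 + x * a)⁻¹ - b * (1 + x * b)⁻¹)
        (a * (-a / (1 + x * a) ^ 2) - b * (-b / (1 + x * b) ^ 2)) x :=
      (ia.const_mul a).sub (ib.const_mul b)
    refine (h.congr_of_eventuallyEq ?_).hasDerivWithinAt
    filter_upwards [] with y
    rw [div_eq_mul_inv, div_eq_mul_inv]
  · intro x hx
    rw [interior_Ici] at hx
    have hx0 : (0:ℝ) ≤ x := le_of_lt hx
    have hxa := hpa x hx0
    have hxb := hpb x hx0
    have key : b / (1 + x * b) ≤ a / (1 + x * a) := by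
      rw [div_le_div_iff₀ hxb hxa]; nlinarith
    have hbn : 0 ≤ b / (1 + x * b) := by positivity
    have sq : (b / (1 + x * b)) ^ 2 ≤ (a / (1 + x * a)) ^ 2 :=
      pow_le_pow_left₀ hbn key 2
    have e1 : a * (-a / (1 + x * a) ^ 2) = -((a / (1 + x * a)) ^ 2) := by
      rw [div_pow]; ring
    have e2 : b * (-b / (1 + x * b) ^ 2) = -((b / (1 + x * b)) ^ 2) := by
      rw [div_pow]; ring
    show a * (-a / (1 + x * a) ^ 2) - b * (-b / (1 + x * b) ^ 2) ≤ 0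
    rw [e1, e2]; linarith

/-- Concavity of the two-user SC-SIC sum-rate on the nonnegative quadrant. -/
theorem noma_two_user_sum_rate_concave
    (h1 h2 : ℝ) (hh2 : 0 < h2) (hle : h2 ≤ h1) :
    ConcaveOn ℝ {p : ℝ × ℝ | 0 ≤ p.1 ∧ 0 ≤ p.2}
      (fun p => Real.log (1 + p.1 * h1)
        + Real.log (1 + p.2 * h2 / (p.1 * h2 + 1))) := by
  have hQ : ({p : ℝ × ℝ | 0 ≤ p.1 ∧ 0 ≤ p.2} : Set (ℝ × ℝ)) = Set.Ici (0 : ℝ × ℝ) := by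
    ext p; simp [Prod.le_def]
  have hQconv : Convex ℝ ({p : ℝ × ℝ | 0 ≤ p.1 ∧ 0 ≤ p.2} : Set (ℝ × ℝ)) := by
    rw [hQ]; exact convex_Ici _
  -- affine map p ↦ 1 + h2 * p.1 + h2 * p.2
  let A : (ℝ × ℝ) →ᵃ[ℝ] ℝ :=
    AffineMap.mk' (fun p => 1 + h2 * p.1 + h2 * p.2)
      (h2 • (LinearMap.fst ℝ ℝ ℝ + LinearMap.snd ℝ ℝ ℝ)) 0
      (by intro p; simp; ring)
  have c1 : ConcaveOn ℝ {p : ℝ × ℝ | 0 ≤ p.1 ∧ 0 ≤ p.2}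
      (fun p : ℝ × ℝ => Real.log (1 + h2 * p.1 + h2 * p.2)) := by
    have := (strictConcaveOn_log_Ioi.concaveOn).comp_affineMap A
    refine (this.subset ?_ hQconv)
    intro p hp
    have h1p : (0:ℝ) < 1 + h2 * p.1 + h2 * p.2 := by
      have := hp.1; have := hp.2; positivity
    simpa [A, AffineMap.coe_mk', Set.mem_preimage] using h1p
  -- second summand: composition with fst
  let B : (ℝ × ℝ) →ᵃ[ℝ] ℝ := (LinearMap.fst ℝ ℝ ℝ).toAffineMap
  have c2 : ConcaveOn ℝ {p : ℝ × ℝ | 0 ≤ p.1 ∧ 0 ≤ p.2}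
      (fun p : ℝ × ℝ => Real.log (1 + p.1 * h1) - Real.log (1 + p.1 * h2)) := by
    have := (logdiff_concaveOn h1 h2 hh2 hle).comp_affineMap B
    refine this.subset (fun p hp => ?_) hQconv
    simpa [B, Set.mem_preimage] using hp.1
  have csum := c1.add c2
  refine csum.congr fun p hp => ?_
  have hd : (0:ℝ) < p.1 * h2 + 1 := by have := hp.1; positivity
  have hn : (0:ℝ) < 1 + h2 * p.1 + h2 * p.2 := by
    have := hp.1; have := hp.2; positivity
  have key : Real.log (1 + p.2 * h2 / (p.1 * h2 + 1))
      = Real.log (1 + h2 * p.1 + h2 * p.2) - Real.log (1 + p.1 * h2) := by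
    have e : 1 + p.2 * h2 / (p.1 * h2 + 1)
        = (1 + h2 * p.1 + h2 * p.2) / (1 + p.1 * h2) := by
      have hd1 : (1:ℝ) + p.1 * h2 ≠ 0 := by linarith
      have hd2 : p.1 * h2 + 1 ≠ 0 := hd.ne'
      rw [eq_div_iff hd1, add_mul, one_mul, div_mul_eq_mul_div, mul_div_assoc,
        add_comm (1:ℝ) (p.1 * h2), div_self hd2, mul_one]
      ring
    rw [e, Real.log_div hn.ne' (by linarith : (0:ℝ) < 1 + p.1 * h2).ne']
  simp only [Pi.add_apply]
  rw [key]; ring
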